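/- arXiv:1905.13167 — 4 statements merged into one kernel-verified Lean document; each statement's English description precedes it below -/
import Mathlib

section
/- Let k, N ∈ ℕ with N ≥ 1, let μ̂_1, …, μ̂_N ∈ ℝ^k, let w ∈ ℝ^k, and let c₁ ≥ 0. Define V̂_n = ⟨w, μ̂_n⟩, define σ ∈ ℝ^k by σ[i] = sqrt(c₁ · Σ_{n,n'=1}^{N} (μ̂_n[i] − μ̂_{n'}[i])²), define μ̄ = (1/N)·Σ_{n=1}^{N} μ̂_n, and define μ̂_lb(w) ∈ ℝ^k componentwise by μ̂_lb(w)[i] = μ̄[i] − (1/N)·σ[i] if w[i] ≥ 0 and μ̂_lb(w)[i] = μ̄[i] + (1/N)·σ[i] if w[i] < 0. Then (1/N)·Σ_{n=1}^{N} V̂_n − (1/N)·sqrt(c₁ · Σ_{n,n'=1}^{N} (V̂_n − V̂_{n'})²) ≥ ⟨w, μ̂_lb(w)⟩. -/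
lemma minkowski_sqrt {k : ℕ} {ι : Type*} [Fintype ι] (f : Fin k → ι → ℝ) :
    Real.sqrt (∑ j, (∑ i, f i j) ^ 2) ≤ ∑ i, Real.sqrt (∑ j, f i j ^ 2) := by
  have h := norm_sum_le (E := EuclideanSpace ℝ ι) Finset.univ
    (fun i => (WithLp.linearEquiv 2 ℝ (ι → ℝ)).symm (f i))
  rw [← map_sum] at h
  simp only [WithLp.linearEquiv_symm_apply, EuclideanSpace.norm_eq,
    AddEquiv.invFun_eq_symm, WithLp.coe_symm_addEquiv, Real.norm_eq_abs, sq_abs, Finset.sum_apply] at h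
  exact h

lemma toPair {N : ℕ} (g : Fin N → Fin N → ℝ) :
    ∑ n, ∑ n', g n n' = ∑ p : Fin N × Fin N, g p.1 p.2 := by
  rw [Fintype.sum_prod_type]


/-- Factorization inequality behind the empirical-Bernstein value lower bound:
the data-dependent part of `V_lb` computed from the per-trajectory value
estimates `V̂_n = ⟨w, μ̂_n⟩` dominates `⟨w, μ̂_lb(w)⟩`, where `μ̂_lb(w)` is the
sign-dependent combination of per-coordinate confidence bounds. -/
theorem value_lower_bound_factorization
    (k N : ℕ) (hN : 1 ≤ N) (μhat : Fin N → Fin k → ℝ) (w : Fin k → ℝ)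
    (c₁ : ℝ) (hc₁ : 0 ≤ c₁)
    (V : Fin N → ℝ) (hV : ∀ n, V n = ∑ i, w i * μhat n i)
    (σ : Fin k → ℝ)
    (hσ : ∀ i, σ i = Real.sqrt (c₁ * ∑ n, ∑ n', (μhat n i - μhat n' i) ^ 2))
    (μbar : Fin k → ℝ) (hμbar : ∀ i, μbar i = (1 / (N : ℝ)) * ∑ n, μhat n i)
    (μlb : Fin k → ℝ)
    (hμlb : ∀ i, μlb i =
      if 0 ≤ w i then μbar i - (1 / (N : ℝ)) * σ i
      else μbar i + (1 / (N : ℝ)) * σ i) :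
    (1 / (N : ℝ)) * ∑ n, V n -
        (1 / (N : ℝ)) * Real.sqrt (c₁ * ∑ n, ∑ n', (V n - V n') ^ 2) ≥
      ∑ i, w i * μlb i := by
  have hNpos : (0:ℝ) < N := by exact_mod_cast hN
  have hrhs : ∑ i, w i * μlb i
      = (1 / (N : ℝ)) * ∑ n, V n - (1 / (N : ℝ)) * ∑ i, |w i| * σ i := by
    have h1 : ∑ i, w i * μlb i
        = ∑ i, (w i * μbar i - (1 / (N : ℝ)) * (|w i| * σ i)) := by
      refine Finset.sum_congr rfl fun i _ => ?_
      rw [hμlb i]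
      by_cases h : 0 ≤ w i
      · simp [h, abs_of_nonneg h]; ring
      · simp [h, abs_of_neg (lt_of_not_ge h)]; ring
    rw [h1, Finset.sum_sub_distrib, ← Finset.mul_sum]
    congr 1
    have h2 : ∑ i, w i * μbar i = (1 / (N : ℝ)) * ∑ n, ∑ i, w i * μhat n i := by
      simp only [hμbar, Finset.mul_sum]
      rw [Finset.sum_comm]
      exact Finset.sum_congr rfl fun n _ => Finset.sum_congr rfl fun i _ => by ring
    rw [h2]
    exact congrArg _ (Finset.sum_congr rfl fun n _ => (hV n).symm)
  rw [hrhs, ge_iff_le, sub_le_sub_iff_left, mul_le_mul_iff_right₀ (by positivity)]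
  calc Real.sqrt (c₁ * ∑ n, ∑ n', (V n - V n') ^ 2)
      = Real.sqrt (∑ p : Fin N × Fin N,
          (∑ i, Real.sqrt c₁ * (w i * (μhat p.1 i - μhat p.2 i))) ^ 2) := by
        congr 1
        rw [toPair (fun n n' => (V n - V n') ^ 2), Finset.mul_sum]
        refine Finset.sum_congr rfl fun p _ => ?_
        rw [← Finset.mul_sum, mul_pow, Real.sq_sqrt hc₁]
        congr 1
        rw [hV, hV, ← Finset.sum_sub_distrib]
        refine congrArg (· ^ 2) (Finset.sum_congr rfl fun i _ => ?_)
        ring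
    _ ≤ ∑ i, Real.sqrt (∑ p : Fin N × Fin N,
          (Real.sqrt c₁ * (w i * (μhat p.1 i - μhat p.2 i))) ^ 2) :=
        minkowski_sqrt _
    _ = ∑ i, |w i| * σ i := by
        refine Finset.sum_congr rfl fun i _ => ?_
        rw [hσ, toPair (fun n n' => (μhat n i - μhat n' i) ^ 2)]
        rw [show ∑ p : Fin N × Fin N, (Real.sqrt c₁ * (w i * (μhat p.1 i - μhat p.2 i))) ^ 2
            = (w i)^2 * (c₁ * ∑ p : Fin N × Fin N, (μhat p.1 i - μhat p.2 i) ^ 2) by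
          rw [Finset.mul_sum, Finset.mul_sum]
          refine Finset.sum_congr rfl fun p _ => ?_
          rw [mul_pow, mul_pow, Real.sq_sqrt hc₁]; ring]
        rw [Real.sqrt_mul (sq_nonneg _), Real.sqrt_sq_eq_abs]
end

section
/- Let k ∈ ℕ, μ_b ∈ ℝ^k, F ⊆ ℝ^k, ε ≥ 0 with ε ≠ 1, and define P_C = {v ∈ ℝ^k : for all μ ∈ F, (1/|1+ε|)·⟨v, μ_b⟩ ≤ ⟨v, μ⟩ ≤ (1/|1−ε|)·⟨v, μ_b⟩}. Suppose μ* ∈ F and w ∈ ℝ^k satisfy ⟨w, μ*⟩ < (1/|1+ε|)·⟨w, μ_b⟩. Then (i) w ∉ P_C, (ii) ⟨w, |1+ε|·μ* − μ_b⟩ < 0, and (iii) every v ∈ P_C satisfies ⟨v, |1+ε|·μ* − μ_b⟩ ≥ 0; that is, the hyperplane {v : ⟨v, |1+ε|·μ* − μ_b⟩ = 0} separates w from P_C. -/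
/-- Correctness of the first rejection case of the separation oracle:
if `⟨w, μ*⟩ < (1/|1+ε|)⟨w, μ_b⟩` for some `μ* ∈ F`, then `w ∉ P_C`,
`⟨w, |1+ε|μ* − μ_b⟩ < 0`, and every `v ∈ P_C` satisfies
`⟨v, |1+ε|μ* − μ_b⟩ ≥ 0`. -/
theorem separation_oracle_lower_consistency_case
    (k : ℕ) (μb : Fin k → ℝ) (F : Set (Fin k → ℝ)) (ε : ℝ)
    (hε : 0 ≤ ε) (hε1 : ε ≠ 1)
    (μstar : Fin k → ℝ) (hμstar : μstar ∈ F) (w : Fin k → ℝ)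
    (hw : ∑ i, w i * μstar i < (1 / |1 + ε|) * ∑ i, w i * μb i) :
    w ∉ {v : Fin k → ℝ | ∀ μ ∈ F,
        (1 / |1 + ε|) * (∑ i, v i * μb i) ≤ ∑ i, v i * μ i ∧
        ∑ i, v i * μ i ≤ (1 / |1 - ε|) * (∑ i, v i * μb i)} ∧
    ∑ i, w i * (|1 + ε| * μstar i - μb i) < 0 ∧
    ∀ v ∈ {v : Fin k → ℝ | ∀ μ ∈ F,
        (1 / |1 + ε|) * (∑ i, v i * μb i) ≤ ∑ i, v i * μ i ∧
        ∑ i, v i * μ i ≤ (1 / |1 - ε|) * (∑ i, v i * μb i)},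
      0 ≤ ∑ i, v i * (|1 + ε| * μstar i - μb i) := by
  have hpos : (0:ℝ) < 1 + ε := by linarith
  have habs : |1 + ε| = 1 + ε := abs_of_pos hpos
  have key : ∀ v : Fin k → ℝ,
      ∑ i, v i * (|1 + ε| * μstar i - μb i)
        = |1 + ε| * (∑ i, v i * μstar i) - ∑ i, v i * μb i := by
    intro v
    rw [Finset.mul_sum, ← Finset.sum_sub_distrib]
    apply Finset.sum_congr rfl
    intro i _
    ring
  refine ⟨?_, ?_, ?_⟩
  · intro h
    have := (h μstar hμstar).1
    linarith
  · rw [key]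
    have : |1 + ε| * (∑ i, w i * μstar i) < |1 + ε| * ((1 / |1 + ε|) * ∑ i, w i * μb i) :=
      by exact mul_lt_mul_of_pos_left hw (by rw [habs]; exact hpos)
    rw [← mul_assoc, mul_one_div, div_self (by rw [habs]; linarith), one_mul] at this
    linarith
  · intro v hv
    have := (hv μstar hμstar).1
    rw [key]
    have h2 : |1 + ε| * ((1 / |1 + ε|) * (∑ i, v i * μb i)) ≤ |1 + ε| * (∑ i, v i * μstar i) :=
      mul_le_mul_of_nonneg_left this (abs_nonneg _)
    rw [← mul_assoc, mul_one_div, div_self (by rw [habs]; linarith), one_mul] at h2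
    linarith
end

section
/- Let k ∈ ℕ, μ_b ∈ ℝ^k, F ⊆ ℝ^k, ε ≥ 0 with ε ≠ 1, and define P_C = {v ∈ ℝ^k : for all μ ∈ F, (1/|1+ε|)·⟨v, μ_b⟩ ≤ ⟨v, μ⟩ ≤ (1/|1−ε|)·⟨v, μ_b⟩}. Suppose μ* ∈ F and w ∈ ℝ^k satisfy ⟨w, μ*⟩ > (1/|1−ε|)·⟨w, μ_b⟩. Then (i) w ∉ P_C, (ii) ⟨w, |1−ε|·μ* − μ_b⟩ > 0, and (iii) every v ∈ P_C satisfies ⟨v, |1−ε|·μ* − μ_b⟩ ≤ 0; that is, the hyperplane {v : ⟨v, |1−ε|·μ* − μ_b⟩ = 0} separates w from P_C. -/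
/-- Correctness of the second rejection case of the separation oracle:
if `⟨w, μ*⟩ > (1/|1−ε|)⟨w, μ_b⟩` for some `μ* ∈ F`, then `w ∉ P_C`,
`⟨w, |1−ε|μ* − μ_b⟩ > 0`, and every `v ∈ P_C` satisfies
`⟨v, |1−ε|μ* − μ_b⟩ ≤ 0`. -/
theorem separation_oracle_upper_consistency_case
    (k : ℕ) (μb : Fin k → ℝ) (F : Set (Fin k → ℝ)) (ε : ℝ)
    (hε : 0 ≤ ε) (hε1 : ε ≠ 1)
    (μstar : Fin k → ℝ) (hμstar : μstar ∈ F) (w : Fin k → ℝ)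
    (hw : ∑ i, w i * μstar i > (1 / |1 - ε|) * ∑ i, w i * μb i) :
    w ∉ {v : Fin k → ℝ | ∀ μ ∈ F,
        (1 / |1 + ε|) * (∑ i, v i * μb i) ≤ ∑ i, v i * μ i ∧
        ∑ i, v i * μ i ≤ (1 / |1 - ε|) * (∑ i, v i * μb i)} ∧
    ∑ i, w i * (|1 - ε| * μstar i - μb i) > 0 ∧
    ∀ v ∈ {v : Fin k → ℝ | ∀ μ ∈ F,
        (1 / |1 + ε|) * (∑ i, v i * μb i) ≤ ∑ i, v i * μ i ∧
        ∑ i, v i * μ i ≤ (1 / |1 - ε|) * (∑ i, v i * μb i)},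
      ∑ i, v i * (|1 - ε| * μstar i - μb i) ≤ 0 := by
  have ha : (0:ℝ) < |1 - ε| := abs_pos.mpr (sub_ne_zero.mpr (Ne.symm hε1))
  have key : ∀ v : Fin k → ℝ,
      ∑ i, v i * (|1 - ε| * μstar i - μb i)
        = |1 - ε| * (∑ i, v i * μstar i) - ∑ i, v i * μb i := by
    intro v
    rw [Finset.mul_sum, ← Finset.sum_sub_distrib]
    congr 1; ext i; ring
  have hinv : |1 - ε| * (1 / |1 - ε|) = 1 := mul_one_div_cancel ha.ne'
  refine ⟨fun h => absurd (h μstar hμstar).2 (not_le.mpr hw), ?_, ?_⟩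
  · rw [key]
    have h := mul_lt_mul_of_pos_left hw ha
    rw [← mul_assoc, hinv, one_mul] at h
    linarith
  · intro v hv
    rw [key]
    have h2 := mul_le_mul_of_nonneg_left (hv μstar hμstar).2 ha.le
    rw [← mul_assoc, hinv, one_mul] at h2
    linarith
end

section
/- Let S and A be finite nonempty types, T ∈ ℕ, and let P₀ : S → ℝ, P : S → A → S → ℝ, π : S → A → ℝ, π_b : S → A → ℝ be nonnegative functions with Σ_s P₀(s) = 1, Σ_{s'} P(s, a, s') = 1 for all s, a, Σ_a π(s, a) = 1 and Σ_a π_b(s, a) = 1 for all s, and π_b(s, a) > 0 for all s, a. For a trajectory τ = ((s_0, a_0), …, (s_T, a_T)) ∈ (S × A)^{T+1}, define p_π(τ) = P₀(s_0) · Π_{t=0}^{T} π(s_t, a_t) · Π_{t=0}^{T−1} P(s_t, a_t, s_{t+1}), and define p_{π_b}(τ) analogously with π_b in place of π. Then for every t ≤ T and every function f : S → ℝ: Σ_τ p_{π_b}(τ) · (Π_{u=0}^{t} π(s_u, a_u)/π_b(s_u, a_u)) · f(s_t) = Σ_τ p_π(τ) · f(s_t). -/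
open Finset

lemma pdis_key (S A : Type) [Fintype S] [Fintype A]
    (P₀ : S → ℝ) (P : S → A → S → ℝ) (π : S → A → ℝ)
    (hPsum : ∀ s a, ∑ s', P s a s' = 1) :
    ∀ (T : ℕ) (t : Fin (T + 1)) (f : S → ℝ) (μ ν : S → A → ℝ),
      (∀ s, ∑ a, μ s a = 1) → (∀ s, ∑ a, ν s a = 1) →
      ∑ τ : Fin (T + 1) → S × A,
        (P₀ (τ 0).1 *
            (∏ u : Fin (T + 1), if u ≤ t then π (τ u).1 (τ u).2 else μ (τ u).1 (τ u).2) *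
            ∏ u : Fin T, P (τ u.castSucc).1 (τ u.castSucc).2 (τ u.succ).1) *
          f (τ t).1 =
      ∑ τ : Fin (T + 1) → S × A,
        (P₀ (τ 0).1 *
            (∏ u : Fin (T + 1), if u ≤ t then π (τ u).1 (τ u).2 else ν (τ u).1 (τ u).2) *
            ∏ u : Fin T, P (τ u.castSucc).1 (τ u.castSucc).2 (τ u.succ).1) *
          f (τ t).1 := by
  intro T
  induction T with
  | zero =>
    intro t f μ ν hμ hν
    have ht : ∀ u : Fin 1, u ≤ t := by intro u; omega
    simp [ht]
  | succ T ih =>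
    intro t f μ ν hμ hν
    by_cases hlast : t = Fin.last (T + 1)
    · subst hlast
      have ht : ∀ u : Fin (T + 2), u ≤ Fin.last (T + 1) := fun u => Fin.le_last u
      simp [ht]
    · have htlt : (t : ℕ) < T + 1 := Fin.lt_last_iff_ne_last.2 hlast
      set t' : Fin (T + 1) := ⟨t, htlt⟩ with ht'
      have hts : t = Fin.castSucc t' := by ext; simp [ht']
      have main : ∀ (μ : S → A → ℝ), (∀ s, ∑ a, μ s a = 1) →
          ∑ τ : Fin (T + 2) → S × A,
            (P₀ (τ 0).1 *
                (∏ u : Fin (T + 2), if u ≤ t then π (τ u).1 (τ u).2 else μ (τ u).1 (τ u).2) *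
                ∏ u : Fin (T + 1), P (τ u.castSucc).1 (τ u.castSucc).2 (τ u.succ).1) *
              f (τ t).1 =
          ∑ σ : Fin (T + 1) → S × A,
            (P₀ (σ 0).1 *
                (∏ u : Fin (T + 1), if u ≤ t' then π (σ u).1 (σ u).2 else μ (σ u).1 (σ u).2) *
                ∏ u : Fin T, P (σ u.castSucc).1 (σ u.castSucc).2 (σ u.succ).1) *
              f (σ t').1 := by
        intro μ hμ
        rw [← Equiv.sum_comp (Fin.snocEquiv (fun _ : Fin (T + 2) => S × A))
          (fun τ => (P₀ (τ 0).1 *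
                (∏ u : Fin (T + 2), if u ≤ t then π (τ u).1 (τ u).2 else μ (τ u).1 (τ u).2) *
                ∏ u : Fin (T + 1), P (τ u.castSucc).1 (τ u.castSucc).2 (τ u.succ).1) *
              f (τ t).1)]
        rw [Fintype.sum_prod_type]
        rw [Finset.sum_comm]
        apply Finset.sum_congr rfl
        intro σ _
        simp only [Fin.snocEquiv_apply, hts, Fin.prod_univ_castSucc, Fin.snoc_castSucc, Fin.snoc_last, Fin.succ_castSucc]
        have hnl : ¬ (Fin.last (T + 1) ≤ Fin.castSucc t') := by
          simp [Fin.le_def, Fin.lt_def]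
          omega
        simp only [Fin.castSucc_le_castSucc_iff, hnl, if_false, Fin.succ_last,
          Fin.snoc_last, show (0 : Fin (T + 2)) = Fin.castSucc (0 : Fin (T + 1)) from rfl,
          Fin.snoc_castSucc]
        have h1 : ∑ x : S × A,
            μ x.1 x.2 * P (σ (Fin.last T)).1 (σ (Fin.last T)).2 x.1 = 1 := by
          rw [Fintype.sum_prod_type]
          have : ∀ s' : S, ∑ a' : A,
              μ s' a' * P (σ (Fin.last T)).1 (σ (Fin.last T)).2 s'
              = P (σ (Fin.last T)).1 (σ (Fin.last T)).2 s' := by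
            intro s'
            rw [← Finset.sum_mul, hμ s', one_mul]
          simp only [this]
          exact hPsum _ _
        set W : ℝ := (∏ i : Fin T,
            if i.castSucc ≤ t' then π (σ i.castSucc).1 (σ i.castSucc).2
            else μ (σ i.castSucc).1 (σ i.castSucc).2) *
          if Fin.last T ≤ t' then π (σ (Fin.last T)).1 (σ (Fin.last T)).2
          else μ (σ (Fin.last T)).1 (σ (Fin.last T)).2 with hW
        set Tr : ℝ := ∏ x : Fin T, P (σ x.castSucc).1 (σ x.castSucc).2 (σ x.succ).1 with hTr
        have step : ∀ x : S × A,
            P₀ (σ 0).1 * (W * μ x.1 x.2) *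
              (Tr * P (σ (Fin.last T)).1 (σ (Fin.last T)).2 x.1) * f (σ t').1
            = (P₀ (σ 0).1 * W * Tr * f (σ t').1) *
              (μ x.1 x.2 * P (σ (Fin.last T)).1 (σ (Fin.last T)).2 x.1) := by
          intro x; ring
        rw [Finset.sum_congr rfl (fun x _ => step x), ← Finset.mul_sum, h1, mul_one]
      rw [main μ hμ, main ν hν, ih t' f μ ν hμ hν]


/-- Unbiasedness of the per-decision importance sampling (PDIS) estimator:
reweighting trajectories drawn from the behaviour policy `π_b` by the
per-decision importance weight `ρ_t = ∏_{u ≤ t} π(a_u|s_u)/π_b(a_u|s_u)`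
yields, for any function `f` of the state at time `t`, the same expectation
as sampling trajectories from the target policy `π`. -/
theorem pdis_unbiased
    (S A : Type) [Fintype S] [Fintype A] [Nonempty S] [Nonempty A]
    (T : ℕ)
    (P₀ : S → ℝ) (P : S → A → S → ℝ) (π πb : S → A → ℝ)
    (hP₀ : ∀ s, 0 ≤ P₀ s) (hP : ∀ s a s', 0 ≤ P s a s')
    (hπ : ∀ s a, 0 ≤ π s a) (hπb : ∀ s a, 0 < πb s a)
    (hP₀sum : ∑ s, P₀ s = 1)
    (hPsum : ∀ s a, ∑ s', P s a s' = 1)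
    (hπsum : ∀ s, ∑ a, π s a = 1)
    (hπbsum : ∀ s, ∑ a, πb s a = 1)
    (t : Fin (T + 1)) (f : S → ℝ) :
    ∑ τ : Fin (T + 1) → S × A,
        (P₀ (τ 0).1 * (∏ u : Fin (T + 1), πb (τ u).1 (τ u).2) *
            ∏ u : Fin T, P (τ u.castSucc).1 (τ u.castSucc).2 (τ u.succ).1) *
          (∏ u ∈ Finset.Iic t, π (τ u).1 (τ u).2 / πb (τ u).1 (τ u).2) *
          f (τ t).1 =
      ∑ τ : Fin (T + 1) → S × A,
        (P₀ (τ 0).1 * (∏ u : Fin (T + 1), π (τ u).1 (τ u).2) *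
            ∏ u : Fin T, P (τ u.castSucc).1 (τ u.castSucc).2 (τ u.succ).1) *
          f (τ t).1 := by
  have cancel : ∀ τ : Fin (T + 1) → S × A,
      (∏ u : Fin (T + 1), πb (τ u).1 (τ u).2) *
        (∏ u ∈ Finset.Iic t, π (τ u).1 (τ u).2 / πb (τ u).1 (τ u).2)
      = ∏ u : Fin (T + 1), if u ≤ t then π (τ u).1 (τ u).2 else πb (τ u).1 (τ u).2 := by
    intro τ
    rw [← Finset.prod_mul_prod_compl (Finset.Iic t)
        (fun u => πb (τ u).1 (τ u).2),
      ← Finset.prod_mul_prod_compl (Finset.Iic t)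
        (fun u => if u ≤ t then π (τ u).1 (τ u).2 else πb (τ u).1 (τ u).2)]
    have h1 : ∏ u ∈ Finset.Iic t,
        (if u ≤ t then π (τ u).1 (τ u).2 else πb (τ u).1 (τ u).2)
        = ∏ u ∈ Finset.Iic t, π (τ u).1 (τ u).2 := by
      apply Finset.prod_congr rfl
      intro u hu
      rw [if_pos (Finset.mem_Iic.1 hu)]
    have h2 : ∏ u ∈ (Finset.Iic t)ᶜ,
        (if u ≤ t then π (τ u).1 (τ u).2 else πb (τ u).1 (τ u).2)
        = ∏ u ∈ (Finset.Iic t)ᶜ, πb (τ u).1 (τ u).2 := by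
      apply Finset.prod_congr rfl
      intro u hu
      rw [if_neg (by simpa using Finset.mem_compl.1 hu)]
    rw [h1, h2, Finset.prod_div_distrib]
    have hne : ∏ u ∈ Finset.Iic t, πb (τ u).1 (τ u).2 ≠ 0 :=
      Finset.prod_ne_zero_iff.2 (fun u _ => (hπb _ _).ne')
    field_simp
  have lhs_eq : ∀ τ : Fin (T + 1) → S × A,
      (P₀ (τ 0).1 * (∏ u : Fin (T + 1), πb (τ u).1 (τ u).2) *
          ∏ u : Fin T, P (τ u.castSucc).1 (τ u.castSucc).2 (τ u.succ).1) *
        (∏ u ∈ Finset.Iic t, π (τ u).1 (τ u).2 / πb (τ u).1 (τ u).2) * f (τ t).1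
      = (P₀ (τ 0).1 *
          (∏ u : Fin (T + 1), if u ≤ t then π (τ u).1 (τ u).2 else πb (τ u).1 (τ u).2) *
          ∏ u : Fin T, P (τ u.castSucc).1 (τ u.castSucc).2 (τ u.succ).1) * f (τ t).1 := by
    intro τ
    rw [← cancel τ]
    ring
  rw [Finset.sum_congr rfl (fun τ _ => lhs_eq τ),
    pdis_key S A P₀ P π hPsum T t f πb π hπbsum hπsum]
  apply Finset.sum_congr rfl
  intro τ _
  simp
end
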